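/- arXiv:2306.12263 — 2 statements merged into one kernel-verified Lean document; each statement's English description precedes it below -/
import Mathlib

section
/- Let a>0, c>0, N>0 and let n≥1 be an integer. Assume p_{n−1}, q_{n−1} exist for the weight ω_{n−1,N} and p_n, q_n exist for the weight ω_{n,N}, and that γ_n := q_n(0) ≠ 0. Then for every z ∈ ℂ one has z·p_{n−1}(z) = p_n(z) − (p_n(0)/q_n(0))·q_n(z); that is, p_{n−1}(z) = (1/z)·( p_n(z) − (α_n/γ_n)·q_n(z) ) with α_n := p_n(0). -/
/-- The contour weight `ω_{n,N}(w) = w^{-n} e^{-Naw} exp(Nc Log(1-a/w))`. -/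
noncomputable def omegaW (a c N : ℝ) (n : ℕ) (w : ℂ) : ℂ :=
  w ^ (-(n : ℤ)) * Complex.exp (-((N * a : ℝ) : ℂ) * w)
    * Complex.exp (((N * c : ℝ) : ℂ) * Complex.log (1 - (a : ℂ) / w))

open Polynomial Metric Finset

section helpers

variable {a c N R : ℝ}

lemma omegaW_continuousOn (ha : 0 < a) (hR : a < R) (j : ℕ) :
    ContinuousOn (omegaW a c N j) (sphere (0:ℂ) R) := by
  have hR0 : (0:ℝ) < R := lt_trans ha hR
  intro w hw
  have hwR : ‖w‖ = R := by simpa [Complex.dist_eq] using hw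
  have hw0 : w ≠ 0 := by
    intro h; rw [h] at hwR; simp at hwR; exact absurd hwR.symm (ne_of_gt hR0)
  apply ContinuousAt.continuousWithinAt
  have h1 : ContinuousAt (fun w : ℂ => w ^ (-(j : ℤ))) w :=
    continuousAt_zpow₀ w _ (Or.inl hw0)
  have h2 : ContinuousAt (fun w : ℂ => Complex.exp (-((N * a : ℝ) : ℂ) * w)) w :=
    Complex.continuous_exp.continuousAt.comp (by fun_prop)
  have hslit : (1 - (a : ℂ) / w) ∈ Complex.slitPlane := by
    refine Complex.mem_slitPlane_iff.2 (Or.inl ?_)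
    have habs : ‖(a:ℂ)/w‖ = a / R := by
      rw [norm_div, hwR, Complex.norm_real, Real.norm_eq_abs, abs_of_pos ha]
    have hre : ((a:ℂ)/w).re < 1 := by
      calc ((a:ℂ)/w).re ≤ ‖(a:ℂ)/w‖ := Complex.re_le_norm _
        _ = a / R := habs
        _ < 1 := by rw [div_lt_one hR0]; exact hR
    simp only [Complex.sub_re, Complex.one_re]
    linarith
  have h3 : ContinuousAt (fun w : ℂ =>
      Complex.exp (((N * c : ℝ) : ℂ) * Complex.log (1 - (a : ℂ) / w))) w := by
    apply Complex.continuous_exp.continuousAt.comp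
    apply ContinuousAt.mul continuousAt_const
    exact ContinuousAt.clog (continuousAt_const.sub (continuousAt_const.div
      continuousAt_id hw0)) hslit
  exact (h1.mul h2).mul h3

/-- The basic linear functional: integral of a polynomial against the weight. -/
noncomputable def Lw (a c N R : ℝ) (j : ℕ) (p : Polynomial ℂ) : ℂ :=
  circleIntegral (fun w => p.eval w * omegaW a c N j w) 0 R

lemma Lw_integrable (ha : 0 < a) (hR : a < R) (j : ℕ) (p : Polynomial ℂ) :
    CircleIntegrable (fun w => p.eval w * omegaW a c N j w) 0 R := by
  refine ContinuousOn.circleIntegrable (le_of_lt (lt_trans ha hR)) ?_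
  exact (p.continuous_aeval.continuousOn).mul (omegaW_continuousOn ha hR j)





lemma Lw_const_mul (j : ℕ) (z : ℂ) (p : Polynomial ℂ) :
    Lw a c N R j (Polynomial.C z * p) = z * Lw a c N R j p := by
  unfold Lw
  rw [show (fun w => (Polynomial.C z * p).eval w * omegaW a c N j w)
      = (fun w => z * (p.eval w * omegaW a c N j w)) from
    funext fun w => by simp [mul_assoc]]
  exact circleIntegral.integral_const_mul z _ 0 R

lemma Lw_sub (ha : 0 < a) (hR : a < R) (j : ℕ) (p q : Polynomial ℂ) :
    Lw a c N R j (p - q) = Lw a c N R j p - Lw a c N R j q := by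
  unfold Lw
  rw [show (fun w => (p-q).eval w * omegaW a c N j w)
      = (fun w => p.eval w * omegaW a c N j w) - (fun w => q.eval w * omegaW a c N j w) from
    funext fun w => by simp [sub_mul]]
  exact circleIntegral.integral_sub (Lw_integrable ha hR j p) (Lw_integrable ha hR j q)

lemma Lw_neg (j : ℕ) (p : Polynomial ℂ) : Lw a c N R j (-p) = - Lw a c N R j p := by
  have := Lw_const_mul (a := a) (c := c) (N := N) (R := R) j (-1) p
  simpa using this

lemma Lw_add (ha : 0 < a) (hR : a < R) (j : ℕ) (p q : Polynomial ℂ) :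
    Lw a c N R j (p + q) = Lw a c N R j p + Lw a c N R j q := by
  have h := Lw_sub (c := c) (N := N) ha hR j p (-q)
  rw [sub_neg_eq_add, Lw_neg, sub_neg_eq_add] at h
  exact h

lemma Lw_zero (j : ℕ) : Lw a c N R j 0 = 0 := by
  unfold Lw
  rw [show (fun w => (0:Polynomial ℂ).eval w * omegaW a c N j w) = (fun _ => (0:ℂ)) from
    funext fun w => by simp]
  simp [circleIntegral]

lemma Lw_sum (ha : 0 < a) (hR : a < R) (j : ℕ) {ι : Type*} (s : Finset ι)
    (f : ι → Polynomial ℂ) :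
    Lw a c N R j (∑ i ∈ s, f i) = ∑ i ∈ s, Lw a c N R j (f i) := by
  classical
  induction s using Finset.induction_on with
  | empty => simp [Lw_zero]
  | insert _ _ hx ih =>
      rw [Finset.sum_insert hx, Finset.sum_insert hx, Lw_add ha hR, ih]

lemma Lw_expand (ha : 0 < a) (hR : a < R) (j : ℕ) (f g : Polynomial ℂ) (M : ℕ)
    (hg : g.natDegree < M) :
    Lw a c N R j (f * g) = ∑ i ∈ Finset.range M, g.coeff i * Lw a c N R j (f * X ^ i) := by
  conv_lhs => rw [g.as_sum_range' M hg, Finset.mul_sum]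
  rw [Lw_sum ha hR]
  refine Finset.sum_congr rfl fun i _ => ?_
  rw [show f * (monomial i) (g.coeff i) = Polynomial.C (g.coeff i) * (f * X ^ i) by
    rw [← Polynomial.C_mul_X_pow_eq_monomial]; ring]
  rw [Lw_const_mul]

lemma circleIntegral_congr_sphere {f g : ℂ → ℂ} (hR : 0 ≤ R)
    (h : ∀ w ∈ sphere (0:ℂ) R, f w = g w) : circleIntegral f 0 R = circleIntegral g 0 R := by
  unfold circleIntegral
  refine intervalIntegral.integral_congr fun θ _ => ?_
  simp only [h _ (circleMap_mem_sphere _ hR θ)]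

lemma Lw_shift (ha : 0 < a) (hR : a < R) (j : ℕ) (p : Polynomial ℂ) :
    Lw a c N R (j + 1) (X * p) = Lw a c N R j p := by
  have hR0 : (0:ℝ) < R := lt_trans ha hR
  unfold Lw
  refine circleIntegral_congr_sphere (le_of_lt hR0) fun w hw => ?_
  have hwR : ‖w‖ = R := by simpa [Complex.dist_eq] using hw
  have hw0 : w ≠ 0 := by
    intro h; rw [h] at hwR; simp at hwR; exact absurd hwR.symm (ne_of_gt hR0)
  have key : w * w ^ (-((j:ℤ)+1)) = w ^ (-(j:ℤ)) := by
    rw [show -((j:ℤ)+1) = -(j:ℤ) - 1 by ring, zpow_sub_one₀ hw0]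
    field_simp
  unfold omegaW
  rw [show (-(((j+1):ℕ):ℤ)) = -((j:ℤ)+1) by push_cast; ring]
  simp only [Polynomial.eval_mul, Polynomial.eval_X]
  calc (w * p.eval w) * (w ^ (-((j:ℤ)+1)) * Complex.exp (-((N * a : ℝ) : ℂ) * w)
        * Complex.exp (((N * c : ℝ) : ℂ) * Complex.log (1 - (a : ℂ) / w)))
      = p.eval w * ((w * w ^ (-((j:ℤ)+1))) * Complex.exp (-((N * a : ℝ) : ℂ) * w)
        * Complex.exp (((N * c : ℝ) : ℂ) * Complex.log (1 - (a : ℂ) / w))) := by ring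
    _ = _ := by rw [key]

end helpers

section helpers2
variable {a c N R : ℝ}

lemma natDeg_lt_of_deg_lt {p : Polynomial ℂ} {k : ℕ} (hk : 0 < k)
    (h : p.degree < (k : WithBot ℕ)) : p.natDegree < k := by
  by_cases hp : p = 0
  · simpa [hp]
  · exact (Polynomial.natDegree_lt_iff_degree_lt hp).2 h

lemma hconv (j : ℕ) (P : Polynomial ℂ) (k : ℕ) :
    circleIntegral (fun w => P.eval w * w ^ k * omegaW a c N j w) 0 R
      = Lw a c N R j (P * X ^ k) := by
  unfold Lw
  congr 1
  funext w
  simp [mul_assoc]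

lemma norm_conv (j : ℕ) (Q : Polynomial ℂ) :
    circleIntegral (fun w => Q.eval w * w ^ (((j+1 : ℕ) : ℤ) - 1) * omegaW a c N (j+1) w) 0 R
      = Lw a c N R (j+1) (Q * X ^ j) := by
  rw [show (fun w => Q.eval w * w ^ (((j+1:ℕ) : ℤ) - 1) * omegaW a c N (j+1) w)
      = fun w => (Q * X ^ j).eval w * omegaW a c N (j+1) w from funext fun w => by
    rw [show (((j+1:ℕ):ℤ) - 1) = (j : ℤ) by push_cast; ring, zpow_natCast]
    simp [mul_assoc]]
  rfl

end helpers2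


/-- `P` is the monic degree-`n` orthogonal polynomial for the weight `ω_{n,N}`
on the circle `|w| = R`. -/
def IsPn (a c N R : ℝ) (n : ℕ) (P : Polynomial ℂ) : Prop :=
  P.Monic ∧ P.natDegree = n ∧
    ∀ k : ℕ, k < n →
      circleIntegral (fun w => P.eval w * w ^ k * omegaW a c N n w) 0 R = 0

/-- `Q` is the second-kind polynomial of degree `≤ n-1` for the weight `ω_{n,N}`
on the circle `|w| = R`. -/
def IsQn (a c N R : ℝ) (n : ℕ) (Q : Polynomial ℂ) : Prop :=
  Q.degree < (n : WithBot ℕ) ∧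
    (∀ k : ℕ, k + 1 < n →
      circleIntegral (fun w => Q.eval w * w ^ k * omegaW a c N n w) 0 R = 0) ∧
    (-1 / (2 * (Real.pi : ℂ) * Complex.I))
      * circleIntegral (fun w => Q.eval w * w ^ ((n : ℤ) - 1) * omegaW a c N n w) 0 R = 1

/-- `z p_{n-1}(z) = p_n(z) - (p_n(0)/q_n(0)) q_n(z)`. -/
theorem statement1
    (a c N R : ℝ) (ha : 0 < a) (hc : 0 < c) (hN : 0 < N) (hR : a < R)
    (n : ℕ) (hn : 1 ≤ n)
    (pm qm pn qn : Polynomial ℂ)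
    (hpm : IsPn a c N R (n - 1) pm) (hqm : IsQn a c N R (n - 1) qm)
    (hpn : IsPn a c N R n pn) (hqn : IsQn a c N R n qn)
    (hγ : qn.eval 0 ≠ 0) :
    ∀ z : ℂ, z * pm.eval z = pn.eval z - (pn.eval 0 / qn.eval 0) * qn.eval z := by
  have hR0 : (0:ℝ) < R := lt_trans ha hR
  have hpi : (2 * (Real.pi:ℂ) * Complex.I) ≠ 0 := by
    simp [Real.pi_ne_zero, Complex.I_ne_zero, Complex.ofReal_ne_zero]
  obtain ⟨n', rfl⟩ : ∃ n', n = n' + 1 := ⟨n - 1, by omega⟩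
  rcases n' with _ | m
  · -- n = 1 : the hypotheses on `qm` are contradictory
    exfalso
    have h0 : qm = 0 := by
      have h1 := hqm.1
      have h2 : qm.degree < 0 := by simpa using h1
      exact Polynomial.degree_eq_bot.1 (Nat.WithBot.lt_zero_iff.1 h2)
    have h3 := hqm.2.2
    rw [h0] at h3
    simp [circleIntegral] at h3
  -- n = m + 2
  simp only [Nat.add_sub_cancel] at hpm hqm
  -- derived orthogonality facts
  have hpm_orth : ∀ k, k < m + 1 → Lw a c N R (m+1) (pm * X ^ k) = 0 := by
    intro k hk
    rw [← hconv]
    exact hpm.2.2 k hk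
  have hpn_orth : ∀ k, k < m + 2 → Lw a c N R (m+1+1) (pn * X ^ k) = 0 := by
    intro k hk
    rw [← hconv]
    exact hpn.2.2 k hk
  have hqn_orth : ∀ k, k + 1 < m + 2 → Lw a c N R (m+1+1) (qn * X ^ k) = 0 := by
    intro k hk
    rw [← hconv]
    exact hqn.2.1 k hk
  have hqm_orth : ∀ k, k + 1 < m + 1 → Lw a c N R (m+1) (qm * X ^ k) = 0 := by
    intro k hk
    rw [← hconv]
    exact hqm.2.1 k hk
  have hqn_norm : Lw a c N R (m+1+1) (qn * X ^ (m+1)) = -(2 * (Real.pi:ℂ) * Complex.I) := by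
    have h := hqn.2.2
    rw [norm_conv (m+1) qn] at h
    field_simp at h
    linear_combination -h
  have hqm_norm : Lw a c N R (m+1) (qm * X ^ m) = -(2 * (Real.pi:ℂ) * Complex.I) := by
    have h := hqm.2.2
    rw [norm_conv m qm] at h
    field_simp at h
    linear_combination -h
  have hqn_deg : qn.natDegree < m + 2 := natDeg_lt_of_deg_lt (by omega) hqn.1
  have hqm_deg : qm.natDegree < m + 1 := natDeg_lt_of_deg_lt (by omega) hqm.1
  have hpm_deg : pm.natDegree = m + 1 := hpm.2.1
  have hpn_deg : pn.natDegree = m + 1 + 1 := hpn.2.1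
  have hpm_top : pm.coeff (m+1) = 1 := by
    have := hpm.1.coeff_natDegree
    rwa [hpm_deg] at this
  have hpn_top : pn.coeff (m+1+1) = 1 := by
    have := hpn.1.coeff_natDegree
    rwa [hpn_deg] at this
  set lam : ℂ := pn.eval 0 / qn.eval 0 with hlam
  set D : Polynomial ℂ := X * pm - pn + Polynomial.C lam * qn with hD
  set mu : ℂ := (-1 / (2 * (Real.pi:ℂ) * Complex.I)) * Lw a c N R (m+1+1) (D * X ^ (m+1))
    with hmu
  set E : Polynomial ℂ := D - Polynomial.C mu * qn with hE
  -- coefficients of E beyond m+1 vanish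
  have hEco : ∀ i, m + 2 ≤ i → E.coeff i = 0 := by
    intro i hi
    obtain ⟨i', rfl⟩ : ∃ i', i = i' + 1 := ⟨i - 1, by omega⟩
    rw [hE, hD]
    simp only [Polynomial.coeff_sub, Polynomial.coeff_add, Polynomial.coeff_C_mul,
      Polynomial.coeff_X_mul]
    have hqzero : qn.coeff (i'+1) = 0 :=
      Polynomial.coeff_eq_zero_of_natDegree_lt (by omega)
    rcases eq_or_lt_of_le hi with h | h
    · have hieq : i' = m + 1 := by omega
      subst hieq
      rw [hpm_top, hpn_top, hqzero]
      ring
    · have h1 : pm.coeff i' = 0 := Polynomial.coeff_eq_zero_of_natDegree_lt (by omega)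
      have h2 : pn.coeff (i'+1) = 0 := Polynomial.coeff_eq_zero_of_natDegree_lt (by omega)
      rw [h1, h2, hqzero]
      ring
  have hE_deg : E.natDegree < m + 2 := by
    apply natDeg_lt_of_deg_lt (by omega)
    rw [Polynomial.degree_lt_iff_coeff_zero]
    intro i hi
    exact hEco i (by exact_mod_cast hi)
  -- orthogonality of E at level n = m+2, for all k < m+2
  have horth : ∀ k, k < m + 2 → Lw a c N R (m+1+1) (E * X ^ k) = 0 := by
    intro k hk
    have hsplit : Lw a c N R (m+1+1) (E * X ^ k)
        = Lw a c N R (m+1+1) (X * (pm * X ^ k)) - Lw a c N R (m+1+1) (pn * X ^ k)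
          + lam * Lw a c N R (m+1+1) (qn * X ^ k)
          - mu * Lw a c N R (m+1+1) (qn * X ^ k) := by
      rw [show E * X ^ k
          = ((X * (pm * X ^ k) - pn * X ^ k) + Polynomial.C lam * (qn * X ^ k))
            - Polynomial.C mu * (qn * X ^ k) by rw [hE, hD]; ring,
        Lw_sub ha hR, Lw_add ha hR, Lw_sub ha hR, Lw_const_mul, Lw_const_mul]
    rcases Nat.lt_or_ge k (m+1) with hk' | hk'
    · rw [hsplit, Lw_shift ha hR, hpm_orth k hk', hpn_orth k (by omega),
        hqn_orth k (by omega)]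
      ring
    · have hk2 : k = m + 1 := by omega
      subst hk2
      have hLD : Lw a c N R (m+1+1) (D * X ^ (m+1))
          = Lw a c N R (m+1+1) (X * (pm * X ^ (m+1))) - Lw a c N R (m+1+1) (pn * X ^ (m+1))
            + lam * -(2 * (Real.pi:ℂ) * Complex.I) := by
        rw [show D * X ^ (m+1)
            = (X * (pm * X ^ (m+1)) - pn * X ^ (m+1)) + Polynomial.C lam * (qn * X ^ (m+1))
            by rw [hD]; ring,
          Lw_add ha hR, Lw_sub ha hR, Lw_const_mul, hqn_norm]
      rw [hsplit, hqn_norm, hmu, ← hLD]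
      field_simp
      ring
  -- top coefficient of E vanishes (pairing with qn)
  have hE1 : E.coeff (m+1) = 0 := by
    have h1 := Lw_expand (c := c) (N := N) ha hR (m+1+1) qn E (m+2) hE_deg
    rw [Finset.sum_eq_single (m+1)] at h1
    rotate_left
    · intro b hb hne
      have hb' : b < m + 2 := Finset.mem_range.1 hb
      rw [hqn_orth b (by omega), mul_zero]
    · intro hni
      exact absurd (Finset.mem_range.2 (by omega)) hni
    rw [hqn_norm] at h1
    have h2 := Lw_expand (c := c) (N := N) ha hR (m+1+1) E qn (m+2) hqn_deg
    rw [Finset.sum_eq_zero (fun k hk => by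
      rw [horth k (Finset.mem_range.1 hk), mul_zero])] at h2
    rw [mul_comm qn E, h2] at h1
    rcases mul_eq_zero.1 h1.symm with h | h
    · exact h
    · exact absurd h (neg_ne_zero.2 hpi)
  -- the main downward induction at level m+1
  have key : ∀ t : ℕ, (∀ i, m + 1 ≤ i + t → E.coeff i = 0) ∧
      (∀ k, k < m + 1 + t → Lw a c N R (m+1) (E * X ^ k) = 0) := by
    intro t
    induction t with
    | zero =>
      constructor
      · intro i hi
        rcases eq_or_lt_of_le (by omega : m + 1 ≤ i) with h | h
        · rw [← h]; exact hE1
        · exact hEco i (by omega)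
      · intro k hk
        rw [← Lw_shift ha hR (m+1) (E * X ^ k),
          show X * (E * X ^ k) = E * X ^ (k+1) by ring]
        exact horth (k+1) (by omega)
    | succ t ih =>
      have hA : ∀ i, m + 1 ≤ i + (t+1) → E.coeff i = 0 := by
        intro i hi
        by_cases hc1 : m + 1 ≤ i + t
        · exact ih.1 i hc1
        have hieq : i + t = m := by omega
        have h1 := Lw_expand (c := c) (N := N) ha hR (m+1) (qm * X ^ t) E (m+2) hE_deg
        rw [Finset.sum_eq_single i] at h1
        rotate_left
        · intro b hb hne
          by_cases hb2 : m + 1 ≤ b + t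
          · rw [ih.1 b hb2, zero_mul]
          · rw [show qm * X ^ t * X ^ b = qm * X ^ (t+b) by rw [mul_assoc, ← pow_add],
              hqm_orth (t+b) (by omega), mul_zero]
        · intro hni
          exact absurd (Finset.mem_range.2 (by omega)) hni
        rw [show qm * X ^ t * X ^ i = qm * X ^ m by
            rw [mul_assoc, ← pow_add, show t + i = m by omega],
          hqm_norm] at h1
        have h2 := Lw_expand (c := c) (N := N) ha hR (m+1) (E * X ^ t) qm (m+1) hqm_deg
        rw [Finset.sum_eq_zero (fun k hk => by
          rw [show E * X ^ t * X ^ k = E * X ^ (t+k) by rw [mul_assoc, ← pow_add],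
            ih.2 (t+k) (by have := Finset.mem_range.1 hk; omega), mul_zero])] at h2
        rw [show (qm * X ^ t) * E = (E * X ^ t) * qm by ring, h2] at h1
        rcases mul_eq_zero.1 h1.symm with h | h
        · exact h
        · exact absurd h (neg_ne_zero.2 hpi)
      refine ⟨hA, ?_⟩
      intro k hk
      by_cases hc2 : k < m + 1 + t
      · exact ih.2 k hc2
      have hkeq : k = m + 1 + t := by omega
      subst hkeq
      have hr_deg : (pm - X ^ (m+1)).natDegree < m + 1 := by
        apply natDeg_lt_of_deg_lt (by omega)
        rw [Polynomial.degree_lt_iff_coeff_zero]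
        intro i hi
        have hi' : m + 1 ≤ i := by exact_mod_cast hi
        rw [Polynomial.coeff_sub, Polynomial.coeff_X_pow]
        rcases eq_or_lt_of_le hi' with h | h
        · rw [← h, hpm_top, if_pos rfl]
          ring
        · rw [Polynomial.coeff_eq_zero_of_natDegree_lt (by omega), if_neg (by omega)]
          ring
      have step1 : Lw a c N R (m+1) ((pm * X ^ t) * E) = 0 := by
        rw [Lw_expand (c := c) (N := N) ha hR (m+1) (pm * X ^ t) E (m+2) hE_deg]
        apply Finset.sum_eq_zero
        intro b hb
        by_cases hb2 : m + 1 ≤ b + (t+1)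
        · rw [hA b hb2, zero_mul]
        · rw [show pm * X ^ t * X ^ b = pm * X ^ (t+b) by rw [mul_assoc, ← pow_add],
            hpm_orth (t+b) (by omega), mul_zero]
      have step2 : Lw a c N R (m+1) ((E * X ^ t) * (pm - X ^ (m+1))) = 0 := by
        rw [Lw_expand (c := c) (N := N) ha hR (m+1) (E * X ^ t) (pm - X ^ (m+1)) (m+1) hr_deg]
        apply Finset.sum_eq_zero
        intro k' hk'
        rw [show E * X ^ t * X ^ k' = E * X ^ (t+k') by rw [mul_assoc, ← pow_add],
          ih.2 (t+k') (by have := Finset.mem_range.1 hk'; omega), mul_zero]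
      rw [show E * X ^ (m+1+t) = (pm * X ^ t) * E - (E * X ^ t) * (pm - X ^ (m+1)) by ring,
        Lw_sub ha hR, step1, step2, sub_zero]
  -- conclude E = 0
  have hE0 : E = 0 := by
    apply Polynomial.ext
    intro i
    rw [Polynomial.coeff_zero]
    exact (key (m+1)).1 i (by omega)
  have hDq : D = Polynomial.C mu * qn := by
    have : D - Polynomial.C mu * qn = 0 := by rw [← hE]; exact hE0
    linear_combination this
  have hD0 : D.eval 0 = 0 := by
    rw [hD]
    simp only [Polynomial.eval_add, Polynomial.eval_sub, Polynomial.eval_mul,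
      Polynomial.eval_X, Polynomial.eval_C, zero_mul, hlam]
    field_simp
    ring
  have hmu0 : mu = 0 := by
    have h := congrArg (Polynomial.eval 0) hDq
    rw [hD0, Polynomial.eval_mul, Polynomial.eval_C] at h
    rcases mul_eq_zero.1 h.symm with h' | h'
    · exact h'
    · exact absurd h' hγ
  have hDzero : D = 0 := by rw [hDq, hmu0]; simp
  intro z
  have h := congrArg (Polynomial.eval z) hDzero
  rw [hD] at h
  simp only [Polynomial.eval_add, Polynomial.eval_sub, Polynomial.eval_mul,
    Polynomial.eval_X, Polynomial.eval_C, Polynomial.eval_zero, hlam] at h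
  linear_combination h
end

section
/- Let a>0, c>0, N>0 and let n≥0 be an integer. Assume p_n, q_n exist for the weight ω_{n,N} and p_{n+1}, q_{n+1} exist for the weight ω_{n+1,N}, and that α_n·β_n ≠ 0, where α_n := p_n(0) and β_n := (1/(2πi))·∮_Γ p_n(w)·ω_{n,N}(w)·w^{−1} dw. Then for every z ∈ ℂ: p_{n+1}(z) = ( z + b_n·(1+β_n·γ_n)/(α_n·β_n) )·p_n(z) − b_n·q_n(z), where γ_n := q_n(0) and b_n := −(1/(2πi))·∮_Γ p_n(w)·w^n·ω_{n,N}(w) dw. -/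
/-- `β_n = (1/(2πi)) ∮ p_n(w) ω_{n,N}(w) w^{-1} dw`. -/
noncomputable def betaN (a c N R : ℝ) (n : ℕ) (P : Polynomial ℂ) : ℂ :=
  (1 / (2 * (Real.pi : ℂ) * Complex.I))
    * circleIntegral (fun w => P.eval w * omegaW a c N n w / w) 0 R

/-- `b_n = -(1/(2πi)) ∮ p_n(w) w^n ω_{n,N}(w) dw`. -/
noncomputable def bSmallN (a c N R : ℝ) (n : ℕ) (P : Polynomial ℂ) : ℂ :=
  -((1 / (2 * (Real.pi : ℂ) * Complex.I))
    * circleIntegral (fun w => P.eval w * w ^ n * omegaW a c N n w) 0 R)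

section Aux
open Polynomial Finset Metric

noncomputable def lamFun (a c N R : ℝ) (n : ℕ) (P : Polynomial ℂ) : ℂ :=
  (1 / (2 * (Real.pi : ℂ) * Complex.I))
    * circleIntegral (fun w => P.eval w * omegaW a c N n w / w) 0 R


lemma lam_expand (Λ : Polynomial ℂ →ₗ[ℂ] ℂ) (S Q : Polynomial ℂ) (m : ℕ) (h : Q.natDegree < m) :
    Λ (S * Q) = ∑ k ∈ Finset.range m, Q.coeff k * Λ (S * X ^ k) := by
  conv_lhs => rw [Q.as_sum_range' m h]
  rw [Finset.mul_sum, map_sum]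
  refine Finset.sum_congr rfl fun k _ => ?_
  rw [show S * (monomial k) (Q.coeff k) = Q.coeff k • (S * X ^ k) by
    rw [smul_eq_C_mul, ← C_mul_X_pow_eq_monomial]; ring, map_smul, smul_eq_mul]

lemma key_abstract (n : ℕ) (hn : 1 ≤ n) (Λ : Polynomial ℂ →ₗ[ℂ] ℂ)
    (pn qn pn1 qn1 : Polynomial ℂ)
    (hpm : pn.Monic) (hpd : pn.natDegree = n)
    (hqd : qn.natDegree ≤ n - 1)
    (hp1m : pn1.Monic) (hp1d : pn1.natDegree = n + 1)
    (hq1d : qn1.natDegree ≤ n)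
    (hpo : ∀ j, 1 ≤ j → j ≤ n → Λ (pn * X ^ j) = 0)
    (hqo : ∀ j, 1 ≤ j → j + 1 ≤ n → Λ (qn * X ^ j) = 0)
    (hqnn : Λ (qn * X ^ n) = -1)
    (hp1o : ∀ j, j ≤ n → Λ (pn1 * X ^ j) = 0)
    (hq1o : ∀ j, j + 1 ≤ n → Λ (qn1 * X ^ j) = 0)
    (hq1n : Λ (qn1 * X ^ n) = -1)
    (hα : pn.coeff 0 ≠ 0) (hβ : Λ pn ≠ 0) :
    pn1 = (X + C (-Λ (pn * X ^ (n + 1)) * (1 + Λ pn * qn.coeff 0) / (pn.coeff 0 * Λ pn))) * pn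
      - C (-Λ (pn * X ^ (n + 1))) * qn := by
  set α := pn.coeff 0 with hαdef
  set β := Λ pn with hβdef
  set γ := qn.coeff 0 with hγdef
  set b := -Λ (pn * X ^ (n + 1)) with hbdef
  -- consequence 1 : coeff 0 vanishes
  have c1 : ∀ S : Polynomial ℂ, S.natDegree ≤ n → (∀ j, j ≤ n → Λ (S * X ^ j) = 0) →
      S.coeff 0 = 0 := by
    intro S hd h
    have e1 : Λ (S * pn) = 0 := by
      rw [lam_expand Λ S pn (n + 1) (by omega)]
      exact Finset.sum_eq_zero fun k hk => by
        rw [h k (by simpa using Nat.lt_succ_iff.mp (Finset.mem_range.mp hk)), mul_zero]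
    have e2 : Λ (S * pn) = S.coeff 0 * β := by
      rw [mul_comm, lam_expand Λ pn S (n + 1) (by omega), Finset.sum_range_succ']
      have hz : ∀ i ∈ Finset.range n, S.coeff (i + 1) * Λ (pn * X ^ (i + 1)) = 0 := by
        intro i hi
        rw [hpo (i + 1) (by omega) (by simpa using Finset.mem_range.mp hi), mul_zero]
      rw [Finset.sum_eq_zero hz, zero_add, pow_zero, mul_one]
    have := e1.symm.trans e2
    exact (mul_eq_zero.mp this.symm).resolve_right hβ
  -- consequence 2 : coeff n vanishes
  have c2 : ∀ S : Polynomial ℂ, S.natDegree ≤ n → (∀ j, j ≤ n → Λ (S * X ^ j) = 0) →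
      S.coeff n = 0 := by
    intro S hd h
    have e1 : Λ (S * qn1) = 0 := by
      rw [lam_expand Λ S qn1 (n + 1) (by omega)]
      exact Finset.sum_eq_zero fun k hk => by
        rw [h k (by simpa using Nat.lt_succ_iff.mp (Finset.mem_range.mp hk)), mul_zero]
    have e2 : Λ (S * qn1) = -S.coeff n := by
      rw [mul_comm, lam_expand Λ qn1 S (n + 1) (by omega), Finset.sum_range_succ]
      have hz : ∀ k ∈ Finset.range n, S.coeff k * Λ (qn1 * X ^ k) = 0 := by
        intro k hk
        rw [hq1o k (by simpa using Finset.mem_range.mp hk), mul_zero]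
      rw [Finset.sum_eq_zero hz, zero_add, hq1n]; ring
    exact neg_eq_zero.mp (e1.symm.trans e2).symm
  -- descent
  have desc : ∀ d : ℕ, ∀ S : Polynomial ℂ, S.natDegree ≤ d → S.natDegree ≤ n →
      (∀ j, j ≤ n → Λ (S * X ^ j) = 0) → S = 0 := by
    intro d
    induction d with
    | zero =>
      intro S h0 hn' h
      rw [Polynomial.eq_C_of_natDegree_le_zero h0, c1 S hn' h, map_zero]
    | succ d ih =>
      intro S hd hn' h
      have h0 : S.coeff 0 = 0 := c1 S hn' h
      have hST : S.divX * X = S := by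
        have := divX_mul_X_add S
        rwa [h0, map_zero, add_zero] at this
      set T := S.divX with hTdef
      have hTd : T.natDegree ≤ d := by
        rw [hTdef, natDegree_divX_eq_natDegree_tsub_one]; omega
      have hTn : T.natDegree ≤ n := le_trans natDegree_divX_le hn'
      have hTj : ∀ j, 1 ≤ j → j ≤ n → Λ (T * X ^ j) = 0 := by
        intro j h1 h2
        have hx : (X : Polynomial ℂ) ^ j = X ^ (j - 1) * X := by
          rw [← pow_succ]; congr 1; omega
        have : T * X ^ j = S * X ^ (j - 1) := by rw [← hST, hx]; ring
        rw [this]; exact h (j - 1) (by omega)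
      have ht : Λ T = 0 := by
        set t := Λ T with htdef
        set S' := β • T - t • pn with hS'def
        have hS'j : ∀ j, j ≤ n → Λ (S' * X ^ j) = 0 := by
          intro j hj
          have : S' * X ^ j = β • (T * X ^ j) - t • (pn * X ^ j) := by
            rw [hS'def, sub_mul, smul_mul_assoc, smul_mul_assoc]
          rw [this, map_sub, map_smul, map_smul, smul_eq_mul, smul_eq_mul]
          rcases Nat.eq_zero_or_pos j with h0j | h1j
          · subst h0j; simp only [pow_zero, mul_one]
            rw [← hβdef, ← htdef]; ring
          · rw [hTj j h1j hj, hpo j h1j hj]; ring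
        have hS'd : S'.natDegree ≤ n := by
          refine le_trans (natDegree_sub_le _ _) (max_le ?_ ?_)
          · exact le_trans (natDegree_smul_le _ _) hTn
          · exact le_trans (natDegree_smul_le _ _) (le_of_eq hpd)
        have hcn := c2 S' hS'd hS'j
        have hTcn : T.coeff n = 0 := by
          rw [hTdef, coeff_divX]
          exact coeff_eq_zero_of_natDegree_lt (by omega)
        have hpcn : pn.coeff n = 1 := by
          have := hpm.coeff_natDegree; rwa [hpd] at this
        rw [hS'def] at hcn
        simp only [coeff_sub, coeff_smul, smul_eq_mul, hTcn, hpcn, mul_zero, mul_one] at hcn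
        exact (sub_eq_zero.mp hcn).symm
      have hT0 : T = 0 := by
        refine ih T hTd hTn ?_
        intro j hj
        rcases Nat.eq_zero_or_pos j with h0j | h1j
        · subst h0j; simpa using ht
        · exact hTj j h1j hj
      rw [← hST, hT0, zero_mul]
  -- determinant identity
  have hdet : α * Λ qn = 1 + β * γ := by
    have h0 : (C α - pn).coeff 0 = 0 := by simp [hαdef]
    have hh : (C α - pn).divX * X = C α - pn := by
      have := divX_mul_X_add (C α - pn); rwa [h0, map_zero, add_zero] at this
    have hhd : (C α - pn).divX.natDegree ≤ n - 1 := by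
      rw [natDegree_divX_eq_natDegree_tsub_one]
      have : (C α - pn).natDegree ≤ n :=
        le_trans (natDegree_sub_le _ _) (max_le (by simp) hpd.le)
      omega
    have hcoef : (C α - pn).divX.coeff (n - 1) = -1 := by
      rw [coeff_divX, show n - 1 + 1 = n by omega, coeff_sub, coeff_C,
        if_neg (by omega : ¬ n = 0)]
      have : pn.coeff n = 1 := by have := hpm.coeff_natDegree; rwa [hpd] at this
      rw [this]; ring
    have key1 : Λ (qn * (C α - pn)) = 1 := by
      have heq : qn * (C α - pn) = (qn * X) * (C α - pn).divX := by
        conv_lhs => rw [← hh]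
        ring
      rw [heq, lam_expand Λ (qn * X) ((C α - pn).divX) n (by omega)]
      rw [Finset.sum_eq_single (n - 1) ?_ ?_]
      · have hx : qn * X * X ^ (n - 1) = qn * X ^ n := by
          rw [mul_assoc, ← pow_succ', show n - 1 + 1 = n by omega]
        rw [hcoef, hx, hqnn]; ring
      · intro k hk hk'
        have hkn := Finset.mem_range.mp hk
        have hx : qn * X * X ^ k = qn * X ^ (k + 1) := by rw [mul_assoc, ← pow_succ']
        rw [hx, hqo (k + 1) (by omega) (by omega), mul_zero]
      · intro hmem
        exact absurd (Finset.mem_range.mpr (by omega)) hmem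
    have heq1 : qn * (C α - pn) = α • qn - qn * pn := by rw [smul_eq_C_mul]; ring
    rw [heq1, map_sub, map_smul, smul_eq_mul] at key1
    have g0 : (C γ - qn).coeff 0 = 0 := by simp [hγdef]
    have hg : (C γ - qn).divX * X = C γ - qn := by
      have := divX_mul_X_add (C γ - qn); rwa [g0, map_zero, add_zero] at this
    have hgd : (C γ - qn).divX.natDegree ≤ n - 1 := by
      refine le_trans natDegree_divX_le ?_
      exact le_trans (natDegree_sub_le _ _) (max_le (by simp) hqd)
    have key2 : Λ (pn * (C γ - qn)) = 0 := by
      have heq : pn * (C γ - qn) = (pn * X) * (C γ - qn).divX := by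
        conv_lhs => rw [← hg]
        ring
      rw [heq, lam_expand Λ (pn * X) ((C γ - qn).divX) n (by omega)]
      refine Finset.sum_eq_zero fun k hk => ?_
      have hx : pn * X * X ^ k = pn * X ^ (k + 1) := by rw [mul_assoc, ← pow_succ']
      rw [hx, hpo (k + 1) (by omega) (by have := Finset.mem_range.mp hk; omega), mul_zero]
    have heq2 : pn * (C γ - qn) = γ • pn - pn * qn := by rw [smul_eq_C_mul]; ring
    rw [heq2, map_sub, map_smul, smul_eq_mul, ← hβdef] at key2
    have hcomm : Λ (qn * pn) = Λ (pn * qn) := by rw [mul_comm]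
    linear_combination key1 - key2 + hcomm
  -- the final combination
  set C0 := b * (1 + β * γ) / (α * β) with hC0
  clear_value C0
  set F := pn1 - (X + C C0) * pn + C b * qn with hF
  have hFd : F.natDegree ≤ n := by
    have hd1 : (pn1 - X * pn).natDegree ≤ n := by
      by_cases hz : pn1 - X * pn = 0
      · rw [hz]; simp
      have hXp : (X * pn).Monic := monic_X.mul hpm
      have hdeg1 : pn1.degree = ((n + 1 : ℕ) : WithBot ℕ) := by
        rw [degree_eq_natDegree hp1m.ne_zero, hp1d]
      have hdeg2 : (X * pn).degree = ((n + 1 : ℕ) : WithBot ℕ) := by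
        rw [degree_eq_natDegree hXp.ne_zero, natDegree_mul X_ne_zero hpm.ne_zero,
          natDegree_X, hpd]
        norm_cast
        omega
      have hlt : (pn1 - X * pn).degree < ((n + 1 : ℕ) : WithBot ℕ) := by
        rw [← hdeg1]
        exact degree_sub_lt (hdeg1.trans hdeg2.symm) hp1m.ne_zero
          (by rw [hp1m.leadingCoeff, hXp.leadingCoeff])
      have := (natDegree_lt_iff_degree_lt (p := pn1 - X * pn) hz (n := n + 1)).mpr hlt
      omega
    have hFsplit : F = (pn1 - X * pn) - C C0 * pn + C b * qn := by rw [hF]; ring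
    rw [hFsplit]
    refine le_trans (natDegree_add_le _ _) (max_le (le_trans (natDegree_sub_le _ _)
      (max_le hd1 ?_)) ?_)
    · exact le_trans natDegree_mul_le (by simp [natDegree_C, hpd])
    · refine le_trans natDegree_mul_le ?_
      simp only [natDegree_C, zero_add]
      omega
  have hC : ∀ (u : ℂ) (P : Polynomial ℂ), Λ (C u * P) = u * Λ P := by
    intro u P; rw [← smul_eq_C_mul, map_smul, smul_eq_mul]
  have hFj : ∀ j, j ≤ n → Λ (F * X ^ j) = 0 := by
    intro j hj
    have hsplit : F * X ^ j
        = (pn1 * X ^ j - pn * X ^ (j + 1)) - C C0 * (pn * X ^ j) + C b * (qn * X ^ j) := by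
      rw [hF]; ring
    rw [hsplit, map_add, map_sub, map_sub, hC, hC]
    rcases Nat.eq_zero_or_pos j with rfl | h1j
    · have h1 : Λ (pn1 * X ^ 0) = 0 := hp1o 0 (Nat.zero_le n)
      have h2 : Λ (pn * X ^ (0 + 1)) = 0 := by
        have := hpo 1 le_rfl hn; simpa using this
      have h3 : C0 * β = b * Λ qn := by
        rw [hC0, ← hdet]
        field_simp
      rw [h1, h2]
      simp only [pow_zero, mul_one, ← hβdef]
      linear_combination -h3
    · rcases eq_or_lt_of_le hj with rfl | hlt
      · have hb' : Λ (pn * X ^ (j + 1)) = -b := by rw [hbdef]; ring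
        rw [hp1o j le_rfl, hqnn, hpo j h1j le_rfl, hb']; ring
      · rw [hp1o j hj, hpo (j + 1) (by omega) (by omega), hpo j h1j hj,
          hqo j h1j (by omega)]
        ring
  have hF0 : F = 0 := desc n F hFd hFd hFj
  rw [hF] at hF0
  linear_combination hF0

section helpers

variable {a c N R : ℝ} {n : ℕ}

lemma sphere_ne_zero (hR : 0 < R) {w : ℂ} (hw : w ∈ sphere (0:ℂ) R) : w ≠ 0 := by
  rw [mem_sphere_zero_iff_norm] at hw
  intro h
  rw [h, norm_zero] at hw
  exact absurd hw.symm (ne_of_gt hR)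

lemma omega_slit (ha : 0 < a) (hR : a < R) {w : ℂ} (hw : w ∈ sphere (0:ℂ) R) :
    1 - (a:ℂ) / w ∈ Complex.slitPlane := by
  have hRpos : (0:ℝ) < R := lt_trans ha hR
  have hw0 : w ≠ 0 := sphere_ne_zero hRpos hw
  have habs : ‖w‖ = R := by
    rw [mem_sphere_zero_iff_norm] at hw; simpa using hw
  rw [Complex.mem_slitPlane_iff]
  by_cases him : w.im = 0
  · left
    have hwre : w = (w.re : ℂ) := by
      apply Complex.ext <;> simp [him]
    have habs' : |w.re| = R := by
      rw [hwre] at habs; simpa using habs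
    have hcast : ((1 : ℂ) - ↑a/↑w.re) = ((1 - a / w.re : ℝ) : ℂ) := by push_cast; ring
    rw [hwre, hcast, Complex.ofReal_re]
    have h1 : a / w.re ≤ |a / w.re| := le_abs_self _
    have h2 : |a / w.re| = a / R := by rw [abs_div, abs_of_pos ha, habs']
    have h3 : a / R < 1 := (div_lt_one hRpos).mpr hR
    linarith
  · right
    have : (1 - (a:ℂ)/w).im = a * w.im / Complex.normSq w := by
      simp [Complex.sub_im, Complex.div_im]
    rw [this]
    exact div_ne_zero (mul_ne_zero (by exact_mod_cast ne_of_gt ha) him)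
      (ne_of_gt (Complex.normSq_pos.mpr hw0))

lemma omega_contOn (ha : 0 < a) (hR : a < R) (m : ℕ) :
    ContinuousOn (omegaW a c N m) (sphere (0:ℂ) R) := by
  have hRpos : (0:ℝ) < R := lt_trans ha hR
  intro w hw
  have hw0 : w ≠ 0 := sphere_ne_zero hRpos hw
  have h1 : ContinuousAt (fun w : ℂ => w ^ (-(m:ℤ))) w :=
    continuousAt_zpow₀ w _ (Or.inl hw0)
  have h2 : ContinuousAt (fun w : ℂ => Complex.exp (-((N * a : ℝ) : ℂ) * w)) w :=
    (Complex.continuous_exp.comp (continuous_const.mul continuous_id)).continuousAt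
  have hf : ContinuousAt (fun w : ℂ => 1 - (a:ℂ) / w) w :=
    continuousAt_const.sub (continuousAt_const.div continuousAt_id hw0)
  have h3 : ContinuousAt
      (fun w : ℂ => Complex.exp (((N * c : ℝ) : ℂ) * Complex.log (1 - (a:ℂ) / w))) w :=
    Complex.continuous_exp.continuousAt.comp
      (continuousAt_const.mul (ContinuousAt.clog hf (omega_slit ha hR hw)))
  exact (((h1.mul h2).mul h3)).continuousWithinAt

lemma poly_integrable (ha : 0 < a) (hR : a < R) (P : Polynomial ℂ) :
    CircleIntegrable (fun w => P.eval w * omegaW a c N n w / w) 0 R := by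
  have hRpos : (0:ℝ) < R := lt_trans ha hR
  refine ContinuousOn.circleIntegrable hRpos.le ?_
  exact (P.continuous_aeval.continuousOn.mul (omega_contOn ha hR n)).div
    continuousOn_id (fun w hw => sphere_ne_zero hRpos hw)

lemma circleIntegral_add' {f g : ℂ → ℂ} {c₀ : ℂ} {r : ℝ} (hf : CircleIntegrable f c₀ r)
    (hg : CircleIntegrable g c₀ r) :
    circleIntegral (fun z => f z + g z) c₀ r
      = circleIntegral f c₀ r + circleIntegral g c₀ r := by
  simp only [circleIntegral, smul_add, intervalIntegral.integral_add hf.out hg.out]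

lemma lamFun_add (ha : 0 < a) (hR : a < R) (P Q : Polynomial ℂ) :
    lamFun a c N R n (P + Q) = lamFun a c N R n P + lamFun a c N R n Q := by
  unfold lamFun
  have : (fun w => (P + Q).eval w * omegaW a c N n w / w)
      = fun w => (P.eval w * omegaW a c N n w / w) + (Q.eval w * omegaW a c N n w / w) := by
    funext w; rw [eval_add]; ring
  rw [this, circleIntegral_add' (poly_integrable ha hR P) (poly_integrable ha hR Q)]
  ring

lemma lamFun_smul (r : ℂ) (P : Polynomial ℂ) :
    lamFun a c N R n (r • P) = r * lamFun a c N R n P := by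
  unfold lamFun
  have : (fun w => (r • P).eval w * omegaW a c N n w / w)
      = fun w => r * (P.eval w * omegaW a c N n w / w) := by
    funext w; rw [eval_smul, smul_eq_mul]; ring
  rw [this, circleIntegral.integral_const_mul]
  ring

lemma omega_succ {w : ℂ} (hw0 : w ≠ 0) :
    omegaW a c N (n + 1) w = omegaW a c N n w / w := by
  unfold omegaW
  rw [show (-(↑(n+1):ℤ)) = -(n:ℤ) + (-1) by push_cast; ring, zpow_add₀ hw0, zpow_neg_one]
  field_simp

lemma lamFun_pow (ha : 0 < a) (hR : a < R) (P : Polynomial ℂ) (k : ℕ) :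
    lamFun a c N R n (P * X ^ (k + 1))
      = (1 / (2 * (Real.pi : ℂ) * Complex.I))
        * circleIntegral (fun w => P.eval w * w ^ k * omegaW a c N n w) 0 R := by
  unfold lamFun
  congr 1
  refine circleIntegral.integral_congr (le_of_lt (lt_trans ha hR)) fun w hw => ?_
  have hw0 : w ≠ 0 := sphere_ne_zero (lt_trans ha hR) hw
  simp only [eval_mul, eval_pow, eval_X, pow_succ]
  field_simp

lemma lamFun_succ (ha : 0 < a) (hR : a < R) (P : Polynomial ℂ) (j : ℕ) :
    lamFun a c N R n (P * X ^ j)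
      = (1 / (2 * (Real.pi : ℂ) * Complex.I))
        * circleIntegral (fun w => P.eval w * w ^ j * omegaW a c N (n + 1) w) 0 R := by
  unfold lamFun
  congr 1
  refine circleIntegral.integral_congr (le_of_lt (lt_trans ha hR)) fun w hw => ?_
  have hw0 : w ≠ 0 := sphere_ne_zero (lt_trans ha hR) hw
  rw [omega_succ hw0]
  simp only [eval_mul, eval_pow, eval_X]
  ring

lemma lamFun_zpow (ha : 0 < a) (hR : a < R) (P : Polynomial ℂ) :
    lamFun a c N R n (P * X ^ n)
      = (1 / (2 * (Real.pi : ℂ) * Complex.I))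
        * circleIntegral (fun w => P.eval w * w ^ ((n:ℤ) - 1) * omegaW a c N n w) 0 R := by
  unfold lamFun
  congr 1
  refine circleIntegral.integral_congr (le_of_lt (lt_trans ha hR)) fun w hw => ?_
  have hw0 : w ≠ 0 := sphere_ne_zero (lt_trans ha hR) hw
  rw [zpow_sub₀ hw0, zpow_natCast, zpow_one]
  simp only [eval_mul, eval_pow, eval_X]
  ring

lemma lamFun_zpow_succ (ha : 0 < a) (hR : a < R) (P : Polynomial ℂ) :
    lamFun a c N R n (P * X ^ n)
      = (1 / (2 * (Real.pi : ℂ) * Complex.I))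
        * circleIntegral
          (fun w => P.eval w * w ^ ((((n:ℕ) + 1 : ℕ):ℤ) - 1) * omegaW a c N (n + 1) w) 0 R := by
  unfold lamFun
  congr 1
  refine circleIntegral.integral_congr (le_of_lt (lt_trans ha hR)) fun w hw => ?_
  have hw0 : w ≠ 0 := sphere_ne_zero (lt_trans ha hR) hw
  rw [show ((((n:ℕ) + 1 : ℕ):ℤ) - 1) = (n:ℤ) by push_cast; ring, zpow_natCast,
    omega_succ hw0]
  simp only [eval_mul, eval_pow, eval_X]
  ring

end helpers

theorem statement2_main
    (a c N R : ℝ) (ha : 0 < a) (hc : 0 < c) (hN : 0 < N) (hR : a < R)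
    (n : ℕ) (hn : 1 ≤ n)
    (pn qn pn1 qn1 : Polynomial ℂ)
    (hpm : pn.Monic) (hpd : pn.natDegree = n)
    (hporth : ∀ k : ℕ, k < n →
      circleIntegral (fun w => pn.eval w * w ^ k * omegaW a c N n w) 0 R = 0)
    (hqdeg : qn.degree < (n : WithBot ℕ))
    (hqorth : ∀ k : ℕ, k + 1 < n →
      circleIntegral (fun w => qn.eval w * w ^ k * omegaW a c N n w) 0 R = 0)
    (hqnorm : (-1 / (2 * (Real.pi : ℂ) * Complex.I))
      * circleIntegral (fun w => qn.eval w * w ^ ((n : ℤ) - 1) * omegaW a c N n w) 0 R = 1)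
    (hp1m : pn1.Monic) (hp1d : pn1.natDegree = n + 1)
    (hp1orth : ∀ k : ℕ, k < n + 1 →
      circleIntegral (fun w => pn1.eval w * w ^ k * omegaW a c N (n+1) w) 0 R = 0)
    (hq1deg : qn1.degree < ((n+1 : ℕ) : WithBot ℕ))
    (hq1orth : ∀ k : ℕ, k + 1 < n + 1 →
      circleIntegral (fun w => qn1.eval w * w ^ k * omegaW a c N (n+1) w) 0 R = 0)
    (hq1norm : (-1 / (2 * (Real.pi : ℂ) * Complex.I))
      * circleIntegral (fun w => qn1.eval w * w ^ (((n+1 : ℕ) : ℤ) - 1)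
          * omegaW a c N (n+1) w) 0 R = 1)
    (hα : pn.coeff 0 ≠ 0) (hβ : lamFun a c N R n pn ≠ 0) :
    pn1 = (X + Polynomial.C (-(lamFun a c N R n (pn * X ^ (n + 1)))
        * (1 + lamFun a c N R n pn * qn.coeff 0) / (pn.coeff 0 * lamFun a c N R n pn))) * pn
      - Polynomial.C (-(lamFun a c N R n (pn * X ^ (n + 1)))) * qn := by
  set Λ : Polynomial ℂ →ₗ[ℂ] ℂ :=
    { toFun := lamFun a c N R n
      map_add' := lamFun_add ha hR
      map_smul' := fun r P => by
        simp only [RingHom.id_apply, smul_eq_mul]; exact lamFun_smul r P } with hΛ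
  have hΛapp : ∀ P, Λ P = lamFun a c N R n P := fun P => rfl
  have hpo : ∀ j, 1 ≤ j → j ≤ n → Λ (pn * X ^ j) = 0 := by
    intro j h1 h2
    rw [hΛapp, show j = (j - 1) + 1 by omega, lamFun_pow ha hR,
      hporth (j - 1) (by omega), mul_zero]
  have hqo : ∀ j, 1 ≤ j → j + 1 ≤ n → Λ (qn * X ^ j) = 0 := by
    intro j h1 h2
    rw [hΛapp, show j = (j - 1) + 1 by omega, lamFun_pow ha hR,
      hqorth (j - 1) (by omega), mul_zero]
  have hqnn : Λ (qn * X ^ n) = -1 := by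
    rw [hΛapp, lamFun_zpow ha hR]
    linear_combination -hqnorm
  have hp1o : ∀ j, j ≤ n → Λ (pn1 * X ^ j) = 0 := by
    intro j hj
    rw [hΛapp, lamFun_succ ha hR, hp1orth j (by omega), mul_zero]
  have hq1o : ∀ j, j + 1 ≤ n → Λ (qn1 * X ^ j) = 0 := by
    intro j hj
    rw [hΛapp, lamFun_succ ha hR, hq1orth j (by omega), mul_zero]
  have hq1n : Λ (qn1 * X ^ n) = -1 := by
    rw [hΛapp, lamFun_zpow_succ ha hR]
    linear_combination -hq1norm
  have hqd : qn.natDegree ≤ n - 1 := by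
    by_cases h0 : qn = 0
    · simp [h0]
    · have := (natDegree_lt_iff_degree_lt h0).mpr hqdeg
      omega
  have hq1d : qn1.natDegree ≤ n := by
    by_cases h0 : qn1 = 0
    · simp [h0]
    · have := (natDegree_lt_iff_degree_lt h0).mpr hq1deg
      omega
  exact key_abstract n hn Λ pn qn pn1 qn1 hpm hpd hqd hp1m hp1d hq1d hpo hqo hqnn
    hp1o hq1o hq1n hα hβ

end Aux

open Polynomial Finset Metric

/-- `p_{n+1}(z) = (z + b_n (1 + β_n γ_n)/(α_n β_n)) p_n(z) - b_n q_n(z)`. -/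
theorem statement2
    (a c N R : ℝ) (ha : 0 < a) (hc : 0 < c) (hN : 0 < N) (hR : a < R)
    (n : ℕ)
    (pn qn pn1 qn1 : Polynomial ℂ)
    (hpn : IsPn a c N R n pn) (hqn : IsQn a c N R n qn)
    (hpn1 : IsPn a c N R (n + 1) pn1) (hqn1 : IsQn a c N R (n + 1) qn1)
    (hαβ : pn.eval 0 * betaN a c N R n pn ≠ 0) :
    ∀ z : ℂ, pn1.eval z =
      (z + bSmallN a c N R n pn * (1 + betaN a c N R n pn * qn.eval 0)
          / (pn.eval 0 * betaN a c N R n pn)) * pn.eval z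
        - bSmallN a c N R n pn * qn.eval z := by
  intro z
  rcases Nat.eq_zero_or_pos n with rfl | hn
  · exfalso
    obtain ⟨hd, -, hnorm⟩ := hqn
    have hq0 : qn = 0 := by
      rw [← degree_eq_bot]
      exact Nat.WithBot.lt_zero_iff.mp (by exact_mod_cast hd)
    rw [hq0] at hnorm
    simp only [eval_zero, zero_mul] at hnorm
    rw [show circleIntegral (fun _ : ℂ => (0:ℂ)) 0 R = 0 from by
      simp [circleIntegral]] at hnorm
    simp at hnorm
  · obtain ⟨hpm, hpd, hporth⟩ := hpn
    obtain ⟨hqdeg, hqorth, hqnorm⟩ := hqn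
    obtain ⟨hp1m, hp1d, hp1orth⟩ := hpn1
    obtain ⟨hq1deg, hq1orth, hq1norm⟩ := hqn1
    have hα : pn.coeff 0 ≠ 0 := by
      rw [coeff_zero_eq_eval_zero]; exact left_ne_zero_of_mul hαβ
    have hβ : lamFun a c N R n pn ≠ 0 := right_ne_zero_of_mul hαβ
    have hmain := statement2_main a c N R ha hc hN hR n hn pn qn pn1 qn1 hpm hpd
      hporth hqdeg hqorth hqnorm hp1m hp1d hp1orth hq1deg hq1orth hq1norm hα hβ
    have hb : bSmallN a c N R n pn = -(lamFun a c N R n (pn * X ^ (n + 1))) := by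
      unfold bSmallN
      rw [lamFun_pow ha hR]
    have hbeta : betaN a c N R n pn = lamFun a c N R n pn := rfl
    have heval := congrArg (Polynomial.eval z) hmain
    simp only [eval_mul, eval_add, eval_sub, eval_X, eval_C] at heval
    rw [hb, hbeta, ← coeff_zero_eq_eval_zero pn, ← coeff_zero_eq_eval_zero qn, heval]
end
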